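/- Let ℓ ≥ 1 and suppose x₁, …, x_m are naturals with each x_i ≤ 2^(ℓ-1) and ∑ x_i ≥ 2^ℓ. Then for the minimal s with ∑_{i=1}^{s+1} ≥ 2^(ℓ-1) (taking s+1 = 1 if x₁ ≥ 2^(ℓ-1)), the prefix sum P = ∑_{i=1}^{s+1} x_i satisfies 2^(ℓ-1) ≤ P ≤ 2^ℓ - 1, and hence P AND 2^(ℓ-1) ≠ 0. -/

import Mathlib

/-- Constructive overflow lemma: with each `x i ≤ 2^(ℓ-1)` and total sum
`≥ 2^ℓ`, the minimal prefix whose sum reaches `2^(ℓ-1)` has sum `P` with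
`2^(ℓ-1) ≤ P ≤ 2^ℓ - 1`, and hence `P AND 2^(ℓ-1) ≠ 0`. -/
theorem minimal_prefix_overflow (ℓ m j : ℕ) (hℓ : 1 ≤ ℓ) (x : ℕ → ℕ)
    (hx : ∀ i < m, x i ≤ 2 ^ (ℓ - 1))
    (htot : 2 ^ ℓ ≤ ∑ i ∈ Finset.range m, x i)
    (hj : 2 ^ (ℓ - 1) ≤ ∑ i ∈ Finset.range j, x i)
    (hjmin : ∀ j' < j, ∑ i ∈ Finset.range j', x i < 2 ^ (ℓ - 1)) :
    2 ^ (ℓ - 1) ≤ ∑ i ∈ Finset.range j, x i ∧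
      (∑ i ∈ Finset.range j, x i) ≤ 2 ^ ℓ - 1 ∧
      ((∑ i ∈ Finset.range j, x i) &&& 2 ^ (ℓ - 1)) ≠ 0 := by
  have hpow : (0:ℕ) < 2 ^ (ℓ - 1) := Nat.pow_pos (by norm_num)
  have hj0 : j ≠ 0 := by
    rintro rfl
    simp at hj
  have hjm : j ≤ m := by
    by_contra h
    push_neg at h
    have := hjmin m h
    have hle : 2 ^ (ℓ - 1) ≤ 2 ^ ℓ := Nat.pow_le_pow_right (by norm_num) (by omega)
    omega
  obtain ⟨k, rfl⟩ : ∃ k, j = k + 1 := ⟨j - 1, by omega⟩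
  have hsplit : ∑ i ∈ Finset.range (k + 1), x i = (∑ i ∈ Finset.range k, x i) + x k :=
    Finset.sum_range_succ x k
  have hxk : x k ≤ 2 ^ (ℓ - 1) := hx k (by omega)
  have hk : ∑ i ∈ Finset.range k, x i < 2 ^ (ℓ - 1) := hjmin k (by omega)
  have hℓsplit : 2 ^ ℓ = 2 ^ (ℓ - 1) + 2 ^ (ℓ - 1) := by
    conv_lhs => rw [show ℓ = (ℓ - 1) + 1 from by omega]
    rw [pow_succ]
    omega
  have hub : ∑ i ∈ Finset.range (k + 1), x i < 2 ^ ℓ := by omega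
  refine ⟨hj, by omega, ?_⟩
  have hbit : (∑ i ∈ Finset.range (k + 1), x i).testBit (ℓ - 1) = true := by
    rw [Nat.testBit_eq_decide_div_mod_eq]
    have hdiv : (∑ i ∈ Finset.range (k + 1), x i) / 2 ^ (ℓ - 1) = 1 := by
      apply Nat.div_eq_of_lt_le
      · simpa using hj
      · omega
    simp [hdiv]
  intro h
  have h2 : (∑ i ∈ Finset.range (k + 1), x i &&& 2 ^ (ℓ - 1)).testBit (ℓ - 1) = true := by
    simp [Nat.testBit_and, hbit]
  rw [h] at h2
  simp [Nat.zero_testBit] at h2
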